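/- Let θ be a positive even integer, let r, c₀ be real numbers, and let n ≠ m be integers with n, m ≥ 1. Suppose yₙ, yₘ : ℝ → ℝ are polynomial functions such that for i ∈ {n, m} and all real x: (x−r)yᵢ''(x) + (−2x² + 2rx + θ)yᵢ'(x) + (2i(x−r) − c₀)yᵢ(x) = 0. Then ∫_{−∞}^{∞} (x−r)^θ e^{−x²} yₙ(x) yₘ(x) dx = 0. -/

import Mathlib

open MeasureTheory Real Filter Polynomial

lemma intpow (k : ℕ) : Integrable (fun x : ℝ => x ^ k * Real.exp (-x^2)) := by
  have h := integrable_rpow_mul_exp_neg_mul_sq (b := 1) one_pos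
    (s := (k : ℝ)) (by exact_mod_cast lt_of_lt_of_le neg_one_lt_zero (Nat.cast_nonneg k))
  simpa [Real.rpow_natCast, neg_one_mul] using h

lemma intpoly (P : Polynomial ℝ) : Integrable (fun x : ℝ => P.eval x * Real.exp (-x^2)) := by
  have h : (fun x : ℝ => P.eval x * Real.exp (-x^2))
      = fun x => ∑ i ∈ Finset.range (P.natDegree + 1), P.coeff i * (x ^ i * Real.exp (-x^2)) := by
    funext x
    rw [Polynomial.eval_eq_sum_range, Finset.sum_mul]
    exact Finset.sum_congr rfl fun i _ => mul_assoc _ _ _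
  rw [h]
  exact integrable_finset_sum _ fun i _ => (intpow i).const_mul _

lemma monomtop (k : ℕ) : Tendsto (fun x : ℝ => x ^ k * Real.exp (-x^2)) atTop (nhds 0) := by
  have h := rpow_mul_exp_neg_mul_sq_isLittleO_exp_neg (b := 1) one_pos (k : ℝ)
  have h2 : Tendsto (fun x : ℝ => Real.exp (-(1/2) * x)) atTop (nhds 0) := by
    apply Real.tendsto_exp_atBot.comp
    exact Tendsto.const_mul_atTop_of_neg (by norm_num : (-(1/2) : ℝ) < 0) tendsto_id
  have h3 := h.isBigO.trans_tendsto h2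
  simpa [Real.rpow_natCast, neg_one_mul] using h3

lemma polytop (P : Polynomial ℝ) :
    Tendsto (fun x : ℝ => P.eval x * Real.exp (-x^2)) atTop (nhds 0) := by
  have h : (fun x : ℝ => P.eval x * Real.exp (-x^2))
      = fun x => ∑ i ∈ Finset.range (P.natDegree + 1), P.coeff i * (x ^ i * Real.exp (-x^2)) := by
    funext x
    rw [Polynomial.eval_eq_sum_range, Finset.sum_mul]
    exact Finset.sum_congr rfl fun i _ => mul_assoc _ _ _
  rw [h]
  have := tendsto_finset_sum (Finset.range (P.natDegree + 1))
    (fun i _ => ((monomtop i).const_mul (P.coeff i)))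
  simpa using this

lemma polybot (P : Polynomial ℝ) :
    Tendsto (fun x : ℝ => P.eval x * Real.exp (-x^2)) atBot (nhds 0) := by
  have h := (polytop (P.comp (-X))).comp tendsto_neg_atBot_atTop
  have : ((fun x : ℝ => (P.comp (-X)).eval x * Real.exp (-x^2)) ∘ fun x : ℝ => -x)
      = fun x : ℝ => P.eval x * Real.exp (-x^2) := by
    funext x; simp [Function.comp, Polynomial.eval_comp]
  rwa [this] at h




/-- Orthogonality of exceptional X₁-Hermite polynomials on (-∞,∞) with respect to the
weight `(x-r)^θ e^{-x²}`. -/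
theorem x1_hermite_orthogonality
    (θ : ℕ) (hθpos : 0 < θ) (hθeven : Even θ)
    (r c0 : ℝ) (n m : ℤ) (hn : 1 ≤ n) (hm : 1 ≤ m) (hnm : n ≠ m)
    (yn ym : ℝ → ℝ)
    (hynpoly : ∃ P : Polynomial ℝ, ∀ x, yn x = P.eval x)
    (hympoly : ∃ P : Polynomial ℝ, ∀ x, ym x = P.eval x)
    (heqn : ∀ x : ℝ,
      (x - r) * deriv (deriv yn) x
        + (-2 * x ^ 2 + 2 * r * x + θ) * deriv yn x
        + (2 * (n : ℝ) * (x - r) - c0) * yn x = 0)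
    (heqm : ∀ x : ℝ,
      (x - r) * deriv (deriv ym) x
        + (-2 * x ^ 2 + 2 * r * x + θ) * deriv ym x
        + (2 * (m : ℝ) * (x - r) - c0) * ym x = 0) :
    ∫ x : ℝ, (x - r) ^ θ * Real.exp (-x ^ 2) * yn x * ym x = 0 := by
  obtain ⟨P, hP⟩ := hynpoly
  obtain ⟨M, hM⟩ := hympoly
  have hyn : yn = fun x => P.eval x := funext hP
  have hym : ym = fun x => M.eval x := funext hM
  subst hyn hym
  have e1 : deriv (fun x : ℝ => P.eval x) = fun y => P.derivative.eval y :=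
    funext fun y => Polynomial.deriv P
  have e2 : deriv (fun x : ℝ => M.eval x) = fun y => M.derivative.eval y :=
    funext fun y => Polynomial.deriv M
  have hA : ∀ x : ℝ, (x - r) * P.derivative.derivative.eval x
      + (-2 * x ^ 2 + 2 * r * x + θ) * P.derivative.eval x
      + (2 * (n : ℝ) * (x - r) - c0) * P.eval x = 0 := by
    intro x
    have h := heqn x
    rw [e1] at h
    simpa [Polynomial.deriv] using h
  have hB : ∀ x : ℝ, (x - r) * M.derivative.derivative.eval x
      + (-2 * x ^ 2 + 2 * r * x + θ) * M.derivative.eval x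
      + (2 * (m : ℝ) * (x - r) - c0) * M.eval x = 0 := by
    intro x
    have h := heqm x
    rw [e2] at h
    simpa [Polynomial.deriv] using h
  set d : ℝ := -2 * ((n : ℝ) - (m : ℝ)) with hd_def
  have hd : d ≠ 0 := by
    have : (n : ℝ) ≠ (m : ℝ) := by exact_mod_cast hnm
    simp [hd_def, sub_eq_zero, this]
  set W : Polynomial ℝ := (X - C r) ^ θ * (P.derivative * M - M.derivative * P) with hW_def
  have hE : ∀ x : ℝ, HasDerivAt (fun x : ℝ => Real.exp (-x ^ 2))
      (Real.exp (-x ^ 2) * (-2 * x)) x := by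
    intro x
    have h1 : HasDerivAt (fun x : ℝ => -x ^ 2) (-(2 * x)) x := by
      simpa using (hasDerivAt_pow 2 x).fun_neg
    have h2 := (Real.hasDerivAt_exp (-x ^ 2)).comp x h1
    refine h2.congr_deriv ?_
    ring
  have key : ∀ x : ℝ, HasDerivAt (fun x => W.eval x * Real.exp (-x ^ 2))
      (d * ((x - r) ^ θ * Real.exp (-x ^ 2) * (P.eval x * M.eval x))) x := by
    intro x
    have h := (W.hasDerivAt x).fun_mul (hE x)
    refine h.congr_deriv ?_
    symm
    have hW' : W.derivative = C (θ : ℝ) * (X - C r) ^ (θ - 1)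
        * (P.derivative * M - M.derivative * P)
        + (X - C r) ^ θ * (P.derivative.derivative * M - M.derivative.derivative * P) := by
      rw [hW_def]
      simp only [derivative_mul, derivative_pow, derivative_sub, derivative_X, derivative_C]
      ring
    rw [hW', hW_def]
    simp only [Polynomial.eval_add, Polynomial.eval_mul, Polynomial.eval_pow,
      Polynomial.eval_sub, Polynomial.eval_X, Polynomial.eval_C]
    have hpow : (x - r) ^ θ = (x - r) ^ (θ - 1) * (x - r) := by
      rw [← pow_succ, Nat.sub_add_cancel hθpos]
    rw [hpow]
    linear_combination ((x - r) ^ (θ - 1) * Real.exp (-x ^ 2) * P.eval x) * hB x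
      - ((x - r) ^ (θ - 1) * Real.exp (-x ^ 2) * M.eval x) * hA x
  have hf'eq : (fun x : ℝ => d * ((x - r) ^ θ * Real.exp (-x ^ 2) * (P.eval x * M.eval x)))
      = fun x => (C d * (X - C r) ^ θ * P * M).eval x * Real.exp (-x ^ 2) := by
    funext x
    simp only [Polynomial.eval_mul, Polynomial.eval_pow, Polynomial.eval_sub,
      Polynomial.eval_X, Polynomial.eval_C]
    ring
  have hint : Integrable (fun x : ℝ =>
      d * ((x - r) ^ θ * Real.exp (-x ^ 2) * (P.eval x * M.eval x))) := by
    rw [hf'eq]; exact intpoly _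
  have hzero : (∫ x : ℝ, d * ((x - r) ^ θ * Real.exp (-x ^ 2) * (P.eval x * M.eval x))) = 0 := by
    have h := integral_of_hasDerivAt_of_tendsto key hint (polybot W) (polytop W)
    simpa using h
  calc (∫ x : ℝ, (x - r) ^ θ * Real.exp (-x ^ 2) * (fun x => P.eval x) x * (fun x => M.eval x) x)
      = ∫ x : ℝ, d⁻¹ * (d * ((x - r) ^ θ * Real.exp (-x ^ 2) * (P.eval x * M.eval x))) := by
        apply integral_congr_ae
        filter_upwards with x
        rw [inv_mul_cancel_left₀ hd]
        ring
    _ = d⁻¹ * ∫ x : ℝ, d * ((x - r) ^ θ * Real.exp (-x ^ 2) * (P.eval x * M.eval x)) :=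
        integral_const_mul _ _
    _ = 0 := by rw [hzero, mul_zero]
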